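/- Let t_r > 0 and let λ : ℝ → ℝ be a continuous, nonnegative function that is periodic with period t_r. Set Λ := ∫₀^{t_r} λ(τ) dτ and assume Λ > 0. Let t_d ≥ 0, let t ∈ ℝ, and let r₁, r₂ be natural numbers. Then the iterated integral ∫_{r₁ t_r + t + t_d}^{(r₁+1) t_r + t + t_d} λ(s) · exp(−∫_{t + t_d}^{s} λ(τ) dτ) · ( ∫_{r₂ t_r + s + t_d}^{(r₂+1) t_r + s + t_d} λ(u) · exp(−∫_{s + t_d}^{u} λ(τ) dτ) du ) ds = (1 − exp(−Λ))² · exp(−(r₁ + r₂)·Λ). -/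

import Mathlib

open intervalIntegral

lemma ftc_exp (lam : ℝ → ℝ) (hcont : Continuous lam) (c a b : ℝ) :
    (∫ u in a..b, lam u * Real.exp (-(∫ τ in c..u, lam τ)))
      = Real.exp (-(∫ τ in c..a, lam τ)) - Real.exp (-(∫ τ in c..b, lam τ)) := by
  have hderiv : ∀ u ∈ Set.uIcc a b,
      HasDerivAt (fun x => -Real.exp (-(∫ τ in c..x, lam τ)))
        (lam u * Real.exp (-(∫ τ in c..u, lam τ))) u := by
    intro u _
    have hF : HasDerivAt (fun x => ∫ τ in c..x, lam τ) (lam u) u :=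
      intervalIntegral.integral_hasDerivAt_right (hcont.intervalIntegrable _ _)
        (hcont.stronglyMeasurableAtFilter _ _) hcont.continuousAt
    have := ((hF.neg).exp).neg
    have h2 : HasDerivAt (fun x => -Real.exp (-(∫ τ in c..x, lam τ)))
        (-(Real.exp (-(∫ τ in c..u, lam τ)) * -lam u)) u := this
    convert h2 using 1
    ring
  have hint : IntervalIntegrable
      (fun u => lam u * Real.exp (-(∫ τ in c..u, lam τ))) MeasureTheory.volume a b := by
    apply Continuous.intervalIntegrable
    exact hcont.mul (((intervalIntegral.continuous_primitive
      (fun a b => hcont.intervalIntegrable a b) c).neg).rexp)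
  rw [intervalIntegral.integral_eq_sub_of_hasDerivAt hderiv hint]
  ring

lemma per_int (tr : ℝ) (lam : ℝ → ℝ) (hcont : Continuous lam)
    (hper : Function.Periodic lam tr) (n : ℕ) (a : ℝ) :
    (∫ τ in a..(a + n * tr), lam τ) = n * (∫ τ in (0:ℝ)..tr, lam τ) := by
  have h := hper.intervalIntegral_add_zsmul_eq (n : ℤ) a
    (fun t₁ t₂ => hcont.intervalIntegrable t₁ t₂)
  simp only [zsmul_eq_mul, Int.cast_natCast] at h
  rw [h, hper.intervalIntegral_add_eq a 0]
  simp [mul_comm]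

/-- Interdetection period counts of consecutive detections are independent and
geometric: the joint probability that the next two detections fall `r₁` and `r₂`
complete periods (respectively) after the detector reactivates is
`(1 − e^{−Λ})² e^{−(r₁+r₂)Λ}`. -/
theorem interdetection_periods_joint_geometric
    (tr : ℝ) (htr : 0 < tr) (lam : ℝ → ℝ) (hcont : Continuous lam)
    (hnn : ∀ s, 0 ≤ lam s) (hper : Function.Periodic lam tr)
    (Λ : ℝ) (hΛdef : Λ = ∫ τ in (0 : ℝ)..tr, lam τ) (hΛ : 0 < Λ)
    (td : ℝ) (htd : 0 ≤ td) (t : ℝ) (r₁ r₂ : ℕ) :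
    (∫ s in (r₁ * tr + t + td)..((r₁ + 1) * tr + t + td),
        lam s * Real.exp (-(∫ τ in (t + td)..s, lam τ)) *
          (∫ u in (r₂ * tr + s + td)..((r₂ + 1) * tr + s + td),
            lam u * Real.exp (-(∫ τ in (s + td)..u, lam τ))))
      = (1 - Real.exp (-Λ)) ^ 2 * Real.exp (-((r₁ + r₂ : ℝ) * Λ)) := by
  have key : ∀ (r : ℕ) (c : ℝ),
      (∫ u in (r * tr + c)..((r + 1) * tr + c),
          lam u * Real.exp (-(∫ τ in c..u, lam τ)))
        = Real.exp (-(r * Λ)) - Real.exp (-((r + 1 : ℝ) * Λ)) := by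
    intro r c
    rw [ftc_exp lam hcont]
    have h1 : (r : ℝ) * tr + c = c + r * tr := by ring
    have h2 : ((r : ℝ) + 1) * tr + c = c + (r + 1 : ℕ) * tr := by push_cast; ring
    rw [h1, h2, per_int tr lam hcont hper, per_int tr lam hcont hper, ← hΛdef]
    push_cast
    ring_nf
  have inner : ∀ s : ℝ,
      (∫ u in (r₂ * tr + s + td)..((r₂ + 1) * tr + s + td),
          lam u * Real.exp (-(∫ τ in (s + td)..u, lam τ)))
        = Real.exp (-(r₂ * Λ)) - Real.exp (-((r₂ + 1 : ℝ) * Λ)) := by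
    intro s
    have := key r₂ (s + td)
    rw [← this]
    congr 1 <;> ring
  simp only [inner]
  rw [intervalIntegral.integral_mul_const]
  have houter : (∫ s in (r₁ * tr + t + td)..((r₁ + 1) * tr + t + td),
      lam s * Real.exp (-(∫ τ in (t + td)..s, lam τ)))
        = Real.exp (-(r₁ * Λ)) - Real.exp (-((r₁ + 1 : ℝ) * Λ)) := by
    have := key r₁ (t + td)
    rw [← this]
    congr 1 <;> ring
  rw [houter]
  have e1 : Real.exp (-((r₁ + 1 : ℝ) * Λ)) = Real.exp (-(r₁ * Λ)) * Real.exp (-Λ) := by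
    rw [← Real.exp_add]; ring_nf
  have e2 : Real.exp (-((r₂ + 1 : ℝ) * Λ)) = Real.exp (-(r₂ * Λ)) * Real.exp (-Λ) := by
    rw [← Real.exp_add]; ring_nf
  have e3 : Real.exp (-((r₁ + r₂ : ℝ) * Λ)) = Real.exp (-(r₁ * Λ)) * Real.exp (-(r₂ * Λ)) := by
    rw [← Real.exp_add]; ring_nf
  rw [e1, e2, e3]
  ring
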